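/- Let K be a nonempty compact metric space and μ a Borel probability measure on K. Let v : K → ℝ and v_n : K → ℝ (n ∈ ℕ) be continuous and strictly positive everywhere, with ∫ v dμ = 1 and ∫ v_n dμ = 1 for all n. Then θ(v_n, v) → 0 as n → ∞ if and only if v_n converges to v uniformly on K. -/

import Mathlib

open MeasureTheory Filter

/-- `α(v₁,v₂) = sup { t > 0 : t·v₁ < v₂ pointwise }`. -/
noncomputable def birkhoffAlpha {K : Type*} (v₁ v₂ : K → ℝ) : ℝ :=
  sSup {t : ℝ | 0 < t ∧ ∀ x : K, t * v₁ x < v₂ x}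

/-- The Birkhoff–Hilbert projective distance `θ(v₁,v₂) = −log(α(v₁,v₂)·α(v₂,v₁))`. -/
noncomputable def birkhoffTheta {K : Type*} (v₁ v₂ : K → ℝ) : ℝ :=
  -Real.log (birkhoffAlpha v₁ v₂ * birkhoffAlpha v₂ v₁)

/-- For continuous positive functions on a nonempty compact space, `birkhoffAlpha`
is attained as the minimum of the ratio `v₂ / v₁`. -/
lemma birkhoffAlpha_spec {K : Type*} [TopologicalSpace K] [CompactSpace K] [Nonempty K]
    (v₁ v₂ : K → ℝ) (h₁ : Continuous v₁) (h₂ : Continuous v₂)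
    (p₁ : ∀ x, 0 < v₁ x) (p₂ : ∀ x, 0 < v₂ x) :
    ∃ x₀ : K, birkhoffAlpha v₁ v₂ = v₂ x₀ / v₁ x₀ ∧
      ∀ x, v₂ x₀ / v₁ x₀ ≤ v₂ x / v₁ x := by
  have hf : Continuous fun x => v₂ x / v₁ x := h₂.div h₁ fun x => (p₁ x).ne'
  obtain ⟨x₀, -, hx₀'⟩ := isCompact_univ.exists_isMinOn Set.univ_nonempty hf.continuousOn
  have hx₀ : ∀ x, v₂ x₀ / v₁ x₀ ≤ v₂ x / v₁ x := fun x => hx₀' (Set.mem_univ x)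
  refine ⟨x₀, ?_, hx₀⟩
  have hm : 0 < v₂ x₀ / v₁ x₀ := div_pos (p₂ x₀) (p₁ x₀)
  have hset : {t : ℝ | 0 < t ∧ ∀ x : K, t * v₁ x < v₂ x} =
      Set.Ioo 0 (v₂ x₀ / v₁ x₀) := by
    ext t
    simp only [Set.mem_setOf_eq, Set.mem_Ioo]
    constructor
    · rintro ⟨ht, h⟩
      exact ⟨ht, (lt_div_iff₀ (p₁ x₀)).2 (h x₀)⟩
    · rintro ⟨ht, h⟩
      exact ⟨ht, fun x => (lt_div_iff₀ (p₁ x)).1 (h.trans_le (hx₀ x))⟩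
  rw [birkhoffAlpha, hset, csSup_Ioo hm]

theorem stmt2 (K : Type*) [MetricSpace K] [CompactSpace K] [Nonempty K]
    [MeasurableSpace K] [BorelSpace K]
    (μ : Measure K) [IsProbabilityMeasure μ]
    (v : K → ℝ) (vn : ℕ → K → ℝ)
    (hvc : Continuous v) (hvnc : ∀ n, Continuous (vn n))
    (hvp : ∀ x, 0 < v x) (hvnp : ∀ n x, 0 < vn n x)
    (hv1 : ∫ x, v x ∂μ = 1) (hvn1 : ∀ n, ∫ x, vn n x ∂μ = 1) :
    Tendsto (fun n => birkhoffTheta (vn n) v) atTop (nhds 0) ↔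
      TendstoUniformly vn v atTop := by
  classical
  set a : ℕ → ℝ := fun n => birkhoffAlpha (vn n) v with ha_def
  set b : ℕ → ℝ := fun n => birkhoffAlpha v (vn n) with hb_def
  have haspec : ∀ n, ∃ x₀ : K, a n = v x₀ / vn n x₀ ∧ ∀ x, v x₀ / vn n x₀ ≤ v x / vn n x :=
    fun n => birkhoffAlpha_spec (vn n) v (hvnc n) hvc (hvnp n) hvp
  have hbspec : ∀ n, ∃ x₀ : K, b n = vn n x₀ / v x₀ ∧ ∀ x, vn n x₀ / v x₀ ≤ vn n x / v x :=
    fun n => birkhoffAlpha_spec v (vn n) hvc (hvnc n) hvp (hvnp n)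
  have ha_pos : ∀ n, 0 < a n := by
    intro n; obtain ⟨x₀, h1, _⟩ := haspec n
    rw [h1]; exact div_pos (hvp x₀) (hvnp n x₀)
  have hb_pos : ∀ n, 0 < b n := by
    intro n; obtain ⟨x₀, h1, _⟩ := hbspec n
    rw [h1]; exact div_pos (hvnp n x₀) (hvp x₀)
  have ha_le : ∀ n x, a n * vn n x ≤ v x := by
    intro n x; obtain ⟨x₀, h1, h2⟩ := haspec n
    rw [h1]; exact (le_div_iff₀ (hvnp n x)).1 (h2 x)
  have hb_le : ∀ n x, b n * v x ≤ vn n x := by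
    intro n x; obtain ⟨x₀, h1, h2⟩ := hbspec n
    rw [h1]; exact (le_div_iff₀ (hvp x)).1 (h2 x)
  -- integrability
  have hvint : Integrable v μ :=
    hvc.integrable_of_hasCompactSupport (HasCompactSupport.of_compactSpace v)
  have hvnint : ∀ n, Integrable (vn n) μ :=
    fun n => (hvnc n).integrable_of_hasCompactSupport (HasCompactSupport.of_compactSpace _)
  -- a n ≤ 1 and b n ≤ 1 via integration
  have ha1 : ∀ n, a n ≤ 1 := by
    intro n
    have := integral_mono ((hvnint n).const_mul (a n)) hvint (ha_le n)
    rwa [integral_const_mul, hvn1 n, hv1, mul_one] at this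
  have hb1 : ∀ n, b n ≤ 1 := by
    intro n
    have := integral_mono (hvint.const_mul (b n)) (hvnint n) (hb_le n)
    rwa [integral_const_mul, hv1, hvn1 n, mul_one] at this
  -- min and max of v
  obtain ⟨xm, -, hxm'⟩ := isCompact_univ.exists_isMinOn Set.univ_nonempty hvc.continuousOn
  obtain ⟨xM, -, hxM'⟩ := isCompact_univ.exists_isMaxOn Set.univ_nonempty hvc.continuousOn
  have hxm : ∀ x, v xm ≤ v x := fun x => hxm' (Set.mem_univ x)
  have hxM : ∀ x, v x ≤ v xM := fun x => hxM' (Set.mem_univ x)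
  set δ : ℝ := v xm with hδ_def
  set V : ℝ := v xM with hV_def
  have hδ : 0 < δ := hvp xm
  have hV : 0 < V := hvp xM
  -- key equivalence : tendsto a ∧ tendsto b pieces
  constructor
  · -- θ → 0 ⇒ uniform convergence
    intro hθ
    have hab : Tendsto (fun n => a n * b n) atTop (nhds 1) := by
      have h1 : Tendsto (fun n => Real.exp (-(birkhoffTheta (vn n) v))) atTop (nhds 1) := by
        have h0 : Tendsto (fun n => -(birkhoffTheta (vn n) v)) atTop (nhds 0) := by
          simpa using hθ.neg
        have := (Real.continuous_exp.tendsto 0).comp h0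
        simpa [Function.comp_def] using this
      refine h1.congr fun n => ?_
      have : 0 < a n * b n := mul_pos (ha_pos n) (hb_pos n)
      simp only [birkhoffTheta, neg_neg, ← ha_def, ← hb_def]
      exact Real.exp_log this
    have ha_t : Tendsto a atTop (nhds 1) := by
      refine tendsto_of_tendsto_of_tendsto_of_le_of_le hab tendsto_const_nhds
        (fun n => ?_) (fun n => ha1 n)
      calc a n * b n ≤ a n * 1 := by
            exact mul_le_mul_of_nonneg_left (hb1 n) (ha_pos n).le
        _ = a n := mul_one _
    have hb_t : Tendsto b atTop (nhds 1) := by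
      refine tendsto_of_tendsto_of_tendsto_of_le_of_le hab tendsto_const_nhds
        (fun n => ?_) (fun n => hb1 n)
      calc a n * b n ≤ 1 * b n := by
            exact mul_le_mul_of_nonneg_right (ha1 n) (hb_pos n).le
        _ = b n := one_mul _
    rw [Metric.tendstoUniformly_iff]
    intro ε hε
    have hA : Tendsto (fun n => (1 / a n - 1) * V) atTop (nhds 0) := by
      have : Tendsto (fun n => 1 / a n) atTop (nhds 1) := by
        simpa using (ha_t.inv₀ one_ne_zero)
      have h2 : Tendsto (fun n => (1 / a n - 1) * V) atTop (nhds ((1 - 1) * V)) :=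
        (this.sub tendsto_const_nhds).mul tendsto_const_nhds
      simpa using h2
    have hB : Tendsto (fun n => (1 - b n) * V) atTop (nhds 0) := by
      have h2 : Tendsto (fun n => (1 - b n) * V) atTop (nhds ((1 - 1) * V)) :=
        (tendsto_const_nhds.sub hb_t).mul tendsto_const_nhds
      simpa using h2
    filter_upwards [hA.eventually (gt_mem_nhds hε), hB.eventually (gt_mem_nhds hε)]
      with n hAn hBn x
    rw [Real.dist_eq, abs_sub_lt_iff]
    constructor
    · -- v x - vn n x < ε
      have h1 : v x - vn n x ≤ (1 - b n) * v x := by nlinarith [hb_le n x]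
      have h2 : (1 - b n) * v x ≤ (1 - b n) * V := by
        have : (0:ℝ) ≤ 1 - b n := by linarith [hb1 n]
        exact mul_le_mul_of_nonneg_left (hxM x) this
      linarith
    · -- vn n x - v x < ε
      have han := ha_pos n
      have h1 : vn n x - v x ≤ (1 / a n - 1) * v x := by
        have h := ha_le n x
        have : vn n x ≤ v x / a n := (le_div_iff₀' han).2 h
        have h3 : v x / a n = (1 / a n) * v x := by ring
        nlinarith
      have h2 : (1 / a n - 1) * v x ≤ (1 / a n - 1) * V := by
        have : (0:ℝ) ≤ 1 / a n - 1 := by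
          have : a n ≤ 1 := ha1 n
          have h4 : 1 ≤ 1 / a n := (le_div_iff₀ han).2 (by linarith)
          linarith
        exact mul_le_mul_of_nonneg_left (hxM x) this
      linarith
  · -- uniform convergence ⇒ θ → 0
    intro hu
    have hb_t : Tendsto b atTop (nhds 1) := by
      rw [tendsto_order]
      constructor
      · intro c hc
        have hpos : 0 < (1 - c) * δ := mul_pos (by linarith) hδ
        have := Metric.tendstoUniformly_iff.1 hu _ hpos
        filter_upwards [this] with n hn
        obtain ⟨x₀, h1, _⟩ := hbspec n
        have hd := hn x₀
        rw [Real.dist_eq, abs_sub_lt_iff] at hd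
        have h2 : v x₀ - (1 - c) * δ < vn n x₀ := by linarith [hd.1]
        rw [h1]
        have h3 : c * v x₀ < vn n x₀ := by
          have : (1 - c) * δ ≤ (1 - c) * v x₀ :=
            mul_le_mul_of_nonneg_left (hxm x₀) (by linarith)
          nlinarith
        exact (lt_div_iff₀ (hvp x₀)).2 (by linarith [h3])
      · intro c hc
        exact Eventually.of_forall fun n => lt_of_le_of_lt (hb1 n) hc
    have ha_t : Tendsto a atTop (nhds 1) := by
      rw [tendsto_order]
      constructor
      · intro c hc
        rcases le_or_gt c 0 with hc0 | hc0
        · exact Eventually.of_forall fun n => lt_of_le_of_lt hc0 (ha_pos n)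
        · have hpos : 0 < (1 / c - 1) * δ := by
            have : 1 < 1 / c := (lt_div_iff₀ hc0).2 (by linarith)
            exact mul_pos (by linarith) hδ
          have := Metric.tendstoUniformly_iff.1 hu _ hpos
          filter_upwards [this] with n hn
          obtain ⟨x₀, h1, _⟩ := haspec n
          have hd := hn x₀
          rw [Real.dist_eq, abs_sub_lt_iff] at hd
          have h2 : vn n x₀ < v x₀ + (1 / c - 1) * δ := by linarith [hd.2]
          rw [h1]
          have h3 : (1 / c - 1) * δ ≤ (1 / c - 1) * v x₀ := by
            have : 1 < 1 / c := (lt_div_iff₀ hc0).2 (by linarith)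
            exact mul_le_mul_of_nonneg_left (hxm x₀) (by linarith)
          have h4 : vn n x₀ < (1 / c) * v x₀ := by nlinarith
          rw [lt_div_iff₀ (hvnp n x₀)]
          have h5 : c * ((1 / c) * v x₀) = v x₀ := by field_simp
          calc c * vn n x₀ < c * ((1 / c) * v x₀) := mul_lt_mul_of_pos_left h4 hc0
            _ = v x₀ := h5
      · intro c hc
        exact Eventually.of_forall fun n => lt_of_le_of_lt (ha1 n) hc
    have hab : Tendsto (fun n => a n * b n) atTop (nhds 1) := by
      simpa using ha_t.mul hb_t
    have hlog : Tendsto (fun n => Real.log (a n * b n)) atTop (nhds 0) := by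
      have := (Real.continuousAt_log one_ne_zero).tendsto.comp hab
      simpa [Function.comp_def] using this
    have := hlog.neg
    simp only [neg_zero] at this
    refine this.congr fun n => ?_
    simp only [birkhoffTheta, ← ha_def, ← hb_def]; rfl
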